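/- Every real projective structure on the circle arises as a quotient I/⟨ρ(1)⟩ where the developing map d : R → R̃P¹ is a homeomorphism onto an open interval I, and ρ(1) ∈ G̃ is a nontrivial element preserving I and acting freely and properly discontinuously on I. -/

import Mathlib

open Topology

private lemma no_repeat {d : ℝ → ℝ} (hd : IsLocalHomeomorph d)
    {a b : ℝ} (hab : a < b) (heq : d a = d b) : False := by
  have hcont : Continuous d := hd.continuous
  have hopen : IsOpenMap d := hd.isOpenMap
  -- the image of the open interval is open; the max on [a,b] must equal d a
  have hne : (Set.Icc a b).Nonempty := Set.nonempty_Icc.2 hab.le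
  obtain ⟨c, hcmem, hcmax⟩ := isCompact_Icc.exists_isMaxOn hne hcont.continuousOn
  obtain ⟨c', hc'mem, hc'min⟩ := isCompact_Icc.exists_isMinOn hne hcont.continuousOn
  have hmax : d c = d a := by
    by_contra hne'
    have hlt : d a < d c := lt_of_le_of_ne (hcmax ⟨le_refl a, hab.le⟩) (Ne.symm hne')
    have hca : c ≠ a := fun hc => by rw [hc] at hlt; exact lt_irrefl _ hlt
    have hcb : c ≠ b := fun hc => by rw [hc, ← heq] at hlt; exact lt_irrefl _ hlt
    have hcin : c ∈ Set.Ioo a b :=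
      ⟨lt_of_le_of_ne hcmem.1 (Ne.symm hca), lt_of_le_of_ne hcmem.2 hcb⟩
    have himg : IsOpen (d '' Set.Ioo a b) := hopen _ isOpen_Ioo
    have hdc : d c ∈ d '' Set.Ioo a b := ⟨c, hcin, rfl⟩
    obtain ⟨ε, hε, hball⟩ := Metric.isOpen_iff.1 himg _ hdc
    have : d c + ε / 2 ∈ d '' Set.Ioo a b := by
      apply hball
      rw [Metric.mem_ball, Real.dist_eq, show d c + ε / 2 - d c = ε / 2 by ring,
        abs_of_pos (half_pos hε)]
      linarith
    obtain ⟨z, hz, hdz⟩ := this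
    have := hcmax (Set.Ioo_subset_Icc_self hz)
    simp only [Set.mem_setOf_eq, hdz] at this
    linarith
  have hmin : d c' = d a := by
    by_contra hne'
    have hlt : d c' < d a := lt_of_le_of_ne (hc'min ⟨le_refl a, hab.le⟩) hne'
    have hca : c' ≠ a := fun hc => by rw [hc] at hlt; exact lt_irrefl _ hlt
    have hcb : c' ≠ b := fun hc => by rw [hc, ← heq] at hlt; exact lt_irrefl _ hlt
    have hcin : c' ∈ Set.Ioo a b :=
      ⟨lt_of_le_of_ne hc'mem.1 (Ne.symm hca), lt_of_le_of_ne hc'mem.2 hcb⟩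
    have himg : IsOpen (d '' Set.Ioo a b) := hopen _ isOpen_Ioo
    have hdc : d c' ∈ d '' Set.Ioo a b := ⟨c', hcin, rfl⟩
    obtain ⟨ε, hε, hball⟩ := Metric.isOpen_iff.1 himg _ hdc
    have : d c' - ε / 2 ∈ d '' Set.Ioo a b := by
      apply hball
      rw [Metric.mem_ball, Real.dist_eq, show d c' - ε / 2 - d c' = -(ε / 2) by ring,
        abs_neg, abs_of_pos (half_pos hε)]
      linarith
    obtain ⟨z, hz, hdz⟩ := this
    have := hc'min (Set.Ioo_subset_Icc_self hz)
    simp only [Set.mem_setOf_eq, hdz] at this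
    linarith
  -- hence d is constant on [a,b]
  have hconst : ∀ x ∈ Set.Icc a b, d x = d a := by
    intro x hx
    have h1 : d x ≤ d a := hmax ▸ hcmax hx
    have h2 : d a ≤ d x := hmin ▸ hc'min hx
    linarith
  -- contradiction with local injectivity at a
  obtain ⟨e, hae, hde⟩ := hd a
  obtain ⟨ε, hε, hball⟩ := Metric.isOpen_iff.1 e.open_source _ hae
  set t := a + min ε (b - a) / 2 with ht
  have htpos : 0 < min ε (b - a) := lt_min hε (by linarith)
  have hta : a < t := by rw [ht]; linarith
  have htsource : t ∈ e.source := by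
    apply hball
    rw [Metric.mem_ball, Real.dist_eq, ht,
      show a + min ε (b - a) / 2 - a = min ε (b - a) / 2 by ring,
      abs_of_pos (half_pos htpos)]
    have := min_le_left ε (b - a)
    linarith
  have htIcc : t ∈ Set.Icc a b := by
    have := min_le_right ε (b - a)
    exact ⟨hta.le, by rw [ht]; linarith⟩
  have : d t = d a := hconst t htIcc
  have : e t = e a := by rw [← hde]; exact this
  have := e.injOn htsource hae this
  exact absurd this (ne_of_gt hta)

/-- Classification of real projective structures on the circle: the developing
map `d : ℝ → R̃P¹ ≅ ℝ` of a projective structure on `ℝ/ℤ`, a local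
homeomorphism equivariant under the holonomy `h = ρ(1)`, is a homeomorphism
onto its image `I` (an open interval), and `ρ(1)` is a nontrivial element
preserving `I` and acting freely and properly discontinuously on `I`; hence the
structure is the quotient `I / ⟨ρ(1)⟩`. -/
theorem stmt9 (d : ℝ → ℝ) (hd : IsLocalHomeomorph d)
    (h : ℝ ≃ₜ ℝ) (hequiv : ∀ x : ℝ, d (x + 1) = h (d x)) :
    Function.Injective d ∧ IsOpenEmbedding d ∧ (Set.range d).OrdConnected ∧
    (∀ y ∈ Set.range d, h y ∈ Set.range d ∧ h.symm y ∈ Set.range d) ∧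
    (∀ n : ℤ, n ≠ 0 → ∀ y ∈ Set.range d, (h.toEquiv ^ n) y ≠ y) ∧
    (∀ y ∈ Set.range d, ∃ U : Set ℝ, IsOpen U ∧ y ∈ U ∧ U ⊆ Set.range d ∧
      ∀ n : ℤ, n ≠ 0 → Disjoint ((fun z => (h.toEquiv ^ n) z) '' U) U) := by
  have hinj : Function.Injective d := by
    intro x y hxy
    rcases lt_trichotomy x y with hlt | heq | hgt
    · exact absurd hxy (fun hc => no_repeat hd hlt hc)
    · exact heq
    · exact absurd hxy.symm (fun hc => no_repeat hd hgt hc)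
  have hsymm : ∀ x : ℝ, d (x - 1) = h.symm (d x) := by
    intro x
    have := hequiv (x - 1)
    rw [sub_add_cancel] at this
    rw [this, Homeomorph.symm_apply_apply]
  have key : ∀ (n : ℤ) (x : ℝ), (h.toEquiv ^ n) (d x) = d (x + n) := by
    intro n
    induction n using Int.induction_on with
    | zero => intro x; simp
    | succ k ih =>
      intro x
      have : (h.toEquiv ^ ((k : ℤ) + 1)) = (h.toEquiv ^ (k : ℤ)) * h.toEquiv := zpow_add_one _ _
      rw [this]
      show (h.toEquiv ^ (k : ℤ)) (h.toEquiv (d x)) = _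
      rw [show h.toEquiv (d x) = d (x + 1) from (hequiv x).symm, ih]
      push_cast
      ring_nf
    | pred k ih =>
      intro x
      have : (h.toEquiv ^ (-(k : ℤ) - 1)) = (h.toEquiv ^ (-(k : ℤ))) * h.toEquiv⁻¹ :=
        zpow_sub_one _ _
      rw [this]
      show (h.toEquiv ^ (-(k : ℤ))) (h.toEquiv⁻¹ (d x)) = _
      have hinv : h.toEquiv⁻¹ (d x) = d (x - 1) := by
        rw [hsymm x]; rfl
      rw [hinv, ih]
      push_cast
      ring_nf
  refine ⟨hinj, hd.isOpenEmbedding_of_injective hinj, ?_, ?_, ?_, ?_⟩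
  · rw [← Set.image_univ]
    exact (isPreconnected_univ.image d hd.continuous.continuousOn).ordConnected
  · rintro y ⟨x, rfl⟩
    exact ⟨⟨x + 1, (hequiv x)⟩, ⟨x - 1, (hsymm x)⟩⟩
  · rintro n hn y ⟨x, rfl⟩ hc
    rw [key n x] at hc
    have := hinj hc
    have : (n : ℝ) = 0 := by linarith
    exact hn (by exact_mod_cast this)
  · rintro y ⟨x, rfl⟩
    refine ⟨d '' Set.Ioo (x - 1/2) (x + 1/2), hd.isOpenMap _ isOpen_Ioo,
      ⟨x, by constructor <;> simp, rfl⟩, Set.image_subset_range _ _, ?_⟩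
    intro n hn
    rw [Set.disjoint_left]
    rintro z ⟨w, ⟨a, ha, rfl⟩, rfl⟩ ⟨b, hb, hab⟩
    rw [show (fun z => (h.toEquiv ^ n) z) (d a) = d (a + n) from key n a] at hab
    have hba : b = a + n := hinj hab
    have h1 : (1 : ℝ) ≤ |(n : ℝ)| := by
      have := Int.one_le_abs (by omega : n ≠ 0)
      calc (1 : ℝ) ≤ (|n| : ℤ) := by exact_mod_cast this
        _ = |(n : ℝ)| := by push_cast; rfl
    have h2 : |(n : ℝ)| < 1 := by
      rw [show (n : ℝ) = b - a from by rw [hba]; ring]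
      rw [abs_lt]
      rcases ha with ⟨ha1, ha2⟩
      rcases hb with ⟨hb1, hb2⟩
      constructor <;> linarith
    linarith
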